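/- Let n ≥ 2 and set ρ = (n−1)/2. For the function φ(x) = log(2 + |x|²) on a metric measure space with distance d and basepoint o (|x| = d(x,o)), and for any kernel P : [0,∞) → [0,∞) satisfying P(r) ≤ C (1+r)^{-σ-1} e^{-(n-1)r} for r ≥ 1, the following holds: for each x with |x| ≥ 1, ∫_{d(x,y) ≥ 1, |y| ≥ 2|x|} |log(2+|x|²) − log(2+|y|²)| P(d(x,y)) dμ(y) ≤ C' uniformly in x, provided the measure μ satisfies μ(B(x,r)) ≤ C e^{(n-1)r} for all r ≥ 1. The same uniform bound holds on the regions {|x| ≥ 2|y|} and {|x|/2 ≤ |y| ≤ 2|x|}. -/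

import Mathlib

open Real MeasureTheory

open scoped ENNReal

lemma aux_vanish {X : Type*} [MeasurableSpace X] (μ : Measure X) (T : Set X)
    (h : X → ℝ≥0∞) (hh : ∀ y ∈ T, h y = 0) : ∫⁻ y in T, h y ∂μ = 0 := by
  refine le_antisymm ?_ zero_le
  rw [← iSup_lintegral_measurable_le_eq_lintegral]
  refine iSup_le fun φ => iSup_le fun hφ => iSup_le fun hle => ?_
  have hU : MeasurableSet ((φ ⁻¹' {0})ᶜ) := (hφ (measurableSet_singleton 0)).compl
  have hind : ∀ y, φ y = ((φ ⁻¹' {0})ᶜ).indicator φ y := by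
    intro y; by_cases hy : φ y = 0 <;> simp [Set.indicator, hy]
  calc ∫⁻ y in T, φ y ∂μ = ∫⁻ y in T, ((φ ⁻¹' {0})ᶜ).indicator φ y ∂μ := by
        simp only [← hind]
    _ = ∫⁻ y in (φ ⁻¹' {0})ᶜ, φ y ∂(μ.restrict T) := lintegral_indicator hU φ
    _ = 0 := by
        rw [Measure.restrict_restrict hU]
        have hemp : (φ ⁻¹' {0})ᶜ ∩ T = ∅ := by
          ext y
          simp only [Set.mem_inter_iff, Set.mem_compl_iff, Set.mem_preimage,
            Set.mem_singleton_iff, Set.mem_empty_iff_false, iff_false, not_and]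
          intro hy hyT
          exact hy (le_antisymm ((hh y hyT) ▸ hle y) zero_le)
        rw [hemp, Measure.restrict_empty, lintegral_zero_measure]
    _ ≤ 0 := le_rfl

lemma aux_core {X : Type*} [MeasurableSpace X] (μ : Measure X) (T : Set X)
    (g : X → ℝ≥0∞) (c : ℝ≥0∞) (h : ∀ y ∈ T, g y ≤ c) :
    ∫⁻ y in T, g y ∂μ ≤ c * μ T := by
  have hb : ∀ y, g y ≤ c + Tᶜ.indicator g y := by
    intro y
    by_cases hy : y ∈ T
    · simp only [Set.indicator_of_notMem (by simpa using hy : y ∉ Tᶜ), add_zero]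
      exact h y hy
    · rw [Set.indicator_of_mem (by simpa using hy : y ∈ Tᶜ)]
      exact le_add_self
  calc ∫⁻ y in T, g y ∂μ ≤ ∫⁻ y in T, (c + Tᶜ.indicator g y) ∂μ := lintegral_mono hb
    _ = ∫⁻ _ in T, c ∂μ + ∫⁻ y in T, Tᶜ.indicator g y ∂μ :=
        lintegral_add_left measurable_const _
    _ = c * μ T + 0 := by
        rw [setLIntegral_const, aux_vanish μ T _ (fun y hy => Set.indicator_of_notMem
          (by simpa using hy : y ∉ Tᶜ) g)]
    _ = c * μ T := add_zero _

lemma aux_log (σ t : ℝ) (hσ : 0 < σ) (ht : 2 ≤ t) :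
    Real.log (2 + 4 * t ^ 2) ≤ (10 / σ) * t ^ (σ / 2) := by
  have ht0 : 0 < t := by linarith
  have h1 : 2 + 4 * t ^ 2 ≤ t ^ (5 : ℕ) := by
    have h8 : (8:ℝ) ≤ t ^ 3 := by nlinarith [sq_nonneg (t-2), sq_nonneg t]
    nlinarith [mul_nonneg (sq_nonneg t) (sub_nonneg.mpr h8)]
  have h2 : Real.log (2 + 4 * t ^ 2) ≤ Real.log (t ^ (5 : ℕ)) :=
    Real.log_le_log (by positivity) h1
  have h3 : Real.log (t ^ (5 : ℕ)) = 5 * Real.log t := by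
    rw [Real.log_pow]; push_cast; ring
  have h4 : Real.log t ≤ (2 / σ) * t ^ (σ / 2) := by
    have hlr : Real.log (t ^ (σ / 2)) = (σ / 2) * Real.log t := Real.log_rpow ht0 _
    have hlt : Real.log (t ^ (σ / 2)) ≤ t ^ (σ / 2) - 1 :=
      Real.log_le_sub_one_of_pos (Real.rpow_pos_of_pos ht0 _)
    have hσ2 : 0 < σ / 2 := by linarith
    have : (σ / 2) * Real.log t ≤ t ^ (σ / 2) := by
      rw [← hlr]; linarith [hlt]
    calc Real.log t = (2 / σ) * ((σ / 2) * Real.log t) := by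
          field_simp
      _ ≤ (2 / σ) * t ^ (σ / 2) := by
          apply mul_le_mul_of_nonneg_left this (by positivity)
  calc Real.log (2 + 4 * t ^ 2) ≤ 5 * Real.log t := by rw [← h3]; exact h2
    _ ≤ 5 * ((2 / σ) * t ^ (σ / 2)) := by
        apply mul_le_mul_of_nonneg_left h4 (by norm_num)
    _ = (10 / σ) * t ^ (σ / 2) := by ring

lemma aux_regions (a b d : ℝ) (ha : 1 ≤ a) (hb : 0 ≤ b) (hd : 1 ≤ d)
    (htri1 : a ≤ b + d) (htri2 : b ≤ a + d)
    (hreg : 2 * a ≤ b ∨ 2 * b ≤ a ∨ (a / 2 ≤ b ∧ b ≤ 2 * a)) :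
    |Real.log (2 + a ^ 2) - Real.log (2 + b ^ 2)| ≤ Real.log (2 + 4 * d ^ 2) := by
  have ha2 : (0:ℝ) < 2 + a ^ 2 := by nlinarith
  have hb2 : (0:ℝ) < 2 + b ^ 2 := by nlinarith
  have hd2 : (1:ℝ) ≤ 2 + 4 * d ^ 2 := by nlinarith
  have hla : 0 ≤ Real.log (2 + a ^ 2) := Real.log_nonneg (by nlinarith)
  have hlb : 0 ≤ Real.log (2 + b ^ 2) := Real.log_nonneg (by nlinarith)
  have hld : 0 ≤ Real.log (2 + 4 * d ^ 2) := Real.log_nonneg hd2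
  rw [abs_sub_le_iff]
  rcases hreg with h1 | h2 | ⟨h3a, h3b⟩
  · -- b ≥ 2a : then b ≤ 2d
    have hab : a ≤ b := by linarith
    have hbd : b ≤ 2 * d := by linarith
    constructor
    · have : Real.log (2 + a ^ 2) ≤ Real.log (2 + b ^ 2) :=
        Real.log_le_log ha2 (by nlinarith)
      linarith
    · have : Real.log (2 + b ^ 2) ≤ Real.log (2 + 4 * d ^ 2) :=
        Real.log_le_log hb2 (by nlinarith)
      linarith
  · -- a ≥ 2b : then a ≤ 2d
    have hba : b ≤ a := by linarith
    have had : a ≤ 2 * d := by linarith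
    constructor
    · have : Real.log (2 + a ^ 2) ≤ Real.log (2 + 4 * d ^ 2) :=
        Real.log_le_log ha2 (by nlinarith)
      linarith
    · have : Real.log (2 + b ^ 2) ≤ Real.log (2 + a ^ 2) :=
        Real.log_le_log hb2 (by nlinarith)
      linarith
  · -- middle region : |diff| ≤ log 4 ≤ log(2+4d²)
    have h4d : Real.log 4 ≤ Real.log (2 + 4 * d ^ 2) :=
      Real.log_le_log (by norm_num) (by nlinarith)
    constructor
    · -- log(2+a²) − log(2+b²) ≤ log 4 : use 2+a² ≤ 4(2+b²) from a ≤ 2b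
      have hab : a ≤ 2 * b := by linarith
      have : Real.log (2 + a ^ 2) ≤ Real.log (4 * (2 + b ^ 2)) :=
        Real.log_le_log ha2 (by nlinarith)
      rw [Real.log_mul (by norm_num) (ne_of_gt hb2)] at this
      linarith
    · have hba : b ≤ 2 * a := h3b
      have : Real.log (2 + b ^ 2) ≤ Real.log (4 * (2 + a ^ 2)) :=
        Real.log_le_log hb2 (by nlinarith)
      rw [Real.log_mul (by norm_num) (ne_of_gt ha2)] at this
      linarith

lemma aux_main {X : Type*} [MetricSpace X] [MeasurableSpace X]
    (μ : Measure X) (o : X) (n : ℕ) (hn : 2 ≤ n)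
    (σ : ℝ) (hσ : 0 < σ) (hσ1 : σ < 1)
    (P : ℝ → ℝ) (C : ℝ) (hC : 0 < C)
    (hP0 : ∀ r, 0 ≤ P r)
    (hP : ∀ r : ℝ, 1 ≤ r → P r ≤ C * (1 + r) ^ (-σ - 1) * Real.exp (-((n : ℝ) - 1) * r))
    (hμ : ∀ (x : X) (r : ℝ), 1 ≤ r →
      μ (Metric.ball x r) ≤ ENNReal.ofReal (C * Real.exp (((n : ℝ) - 1) * r)))
    (x : X) (R : Set X)
    (hR1 : ∀ y ∈ R, 1 ≤ dist x y)
    (hR2 : ∀ y ∈ R, |Real.log (2 + dist x o ^ 2) - Real.log (2 + dist y o ^ 2)| ≤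
      Real.log (2 + 4 * dist x y ^ 2)) :
    ∫⁻ y in R, ENNReal.ofReal
        (|Real.log (2 + dist x o ^ 2) - Real.log (2 + dist y o ^ 2)| * P (dist x y)) ∂μ
      ≤ ENNReal.ofReal
        (∑' k : ℕ, C ^ 2 * Real.exp ((n : ℝ) - 1) * (10 / σ) * ((k : ℝ) + 2) ^ (-1 - σ / 2)) := by
  have hn1 : (1:ℝ) ≤ (n:ℝ) - 1 := by
    have : (2:ℝ) ≤ (n:ℝ) := by exact_mod_cast hn
    linarith
  set g : X → ℝ≥0∞ := fun y => ENNReal.ofReal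
      (|Real.log (2 + dist x o ^ 2) - Real.log (2 + dist y o ^ 2)| * P (dist x y)) with hg
  set A : ℕ → Set X := fun k => {y | (k:ℝ) + 1 ≤ dist x y ∧ dist x y < (k:ℝ) + 2} with hA
  set bfun : ℕ → ℝ := fun k =>
      C ^ 2 * Real.exp ((n : ℝ) - 1) * (10 / σ) * ((k : ℝ) + 2) ^ (-1 - σ / 2) with hbfun
  -- summability
  have hsum0 : Summable (fun k : ℕ => ((k : ℝ) + 2) ^ (-1 - σ / 2)) := by
    have h1 : Summable (fun k : ℕ => ((k : ℝ)) ^ (-1 - σ / 2)) :=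
      Real.summable_nat_rpow.mpr (by linarith)
    have h2 := (summable_nat_add_iff 2).mpr h1
    refine h2.congr fun k => ?_
    push_cast
    ring_nf
  have hsum : Summable bfun := hsum0.mul_left _
  have hbnn : ∀ k, 0 ≤ bfun k := by
    intro k
    have : (0:ℝ) < (k:ℝ) + 2 := by positivity
    have := Real.rpow_nonneg this.le (-1 - σ / 2)
    positivity
  -- covering
  have hcov : R ⊆ ⋃ k : ℕ, (R ∩ A k) := by
    intro y hy
    have hd := hR1 y hy
    refine Set.mem_iUnion.mpr ⟨⌊dist x y - 1⌋₊, hy, ?_, ?_⟩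
    · have := Nat.floor_le (by linarith : (0:ℝ) ≤ dist x y - 1)
      linarith
    · have := Nat.lt_floor_add_one (dist x y - 1)
      linarith
  -- per-annulus constant bound
  have hMnn : ∀ k : ℕ, 0 ≤ Real.log (2 + 4 * ((k:ℝ) + 2) ^ 2) *
      (C * ((k:ℝ) + 2) ^ (-σ - 1) * Real.exp (-((n:ℝ) - 1) * ((k:ℝ) + 1))) := by
    intro k
    have h1 : (0:ℝ) ≤ Real.log (2 + 4 * ((k:ℝ) + 2) ^ 2) := Real.log_nonneg (by nlinarith)
    have h2 : (0:ℝ) ≤ ((k:ℝ) + 2) ^ (-σ - 1) := Real.rpow_nonneg (by positivity) _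
    positivity
  have hpt : ∀ k : ℕ, ∀ y ∈ R ∩ A k, g y ≤ ENNReal.ofReal
      (Real.log (2 + 4 * ((k:ℝ) + 2) ^ 2) *
        (C * ((k:ℝ) + 2) ^ (-σ - 1) * Real.exp (-((n:ℝ) - 1) * ((k:ℝ) + 1)))) := by
    intro k y ⟨hyR, hy1, hy2⟩
    apply ENNReal.ofReal_le_ofReal
    set d := dist x y with hdd
    have hd1 : 1 ≤ d := hR1 y hyR
    have hd0 : (0:ℝ) < d := by linarith
    have hlog1 : |Real.log (2 + dist x o ^ 2) - Real.log (2 + dist y o ^ 2)| ≤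
        Real.log (2 + 4 * d ^ 2) := hR2 y hyR
    have hlognn : (0:ℝ) ≤ Real.log (2 + 4 * d ^ 2) := Real.log_nonneg (by nlinarith)
    have hPle : P d ≤ C * (1 + d) ^ (-σ - 1) * Real.exp (-((n:ℝ) - 1) * d) := hP d hd1
    have hstep1 : |Real.log (2 + dist x o ^ 2) - Real.log (2 + dist y o ^ 2)| * P d ≤
        Real.log (2 + 4 * d ^ 2) * (C * (1 + d) ^ (-σ - 1) * Real.exp (-((n:ℝ) - 1) * d)) := by
      apply mul_le_mul hlog1 hPle (hP0 d) hlognn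
    refine hstep1.trans ?_
    have hrp : (1 + d) ^ (-σ - 1) ≤ ((k:ℝ) + 2) ^ (-σ - 1) :=
      Real.rpow_le_rpow_of_nonpos (by positivity) (by linarith) (by linarith)
    have hex : Real.exp (-((n:ℝ) - 1) * d) ≤ Real.exp (-((n:ℝ) - 1) * ((k:ℝ) + 1)) := by
      apply Real.exp_le_exp.mpr
      nlinarith
    have hlog2 : Real.log (2 + 4 * d ^ 2) ≤ Real.log (2 + 4 * ((k:ℝ) + 2) ^ 2) :=
      Real.log_le_log (by nlinarith) (by nlinarith)
    have hrpnn : (0:ℝ) ≤ (1 + d) ^ (-σ - 1) := Real.rpow_nonneg (by linarith) _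
    have hrpnn2 : (0:ℝ) ≤ ((k:ℝ) + 2) ^ (-σ - 1) := Real.rpow_nonneg (by positivity) _
    have hmul : C * (1 + d) ^ (-σ - 1) * Real.exp (-((n:ℝ) - 1) * d) ≤
        C * ((k:ℝ) + 2) ^ (-σ - 1) * Real.exp (-((n:ℝ) - 1) * ((k:ℝ) + 1)) := by
      apply mul_le_mul
      · exact mul_le_mul_of_nonneg_left hrp hC.le
      · exact hex
      · positivity
      · positivity
    apply mul_le_mul hlog2 hmul (by positivity) (Real.log_nonneg (by nlinarith))
  -- per-annulus integral bound
  have hann : ∀ k : ℕ, ∫⁻ y in R ∩ A k, g y ∂μ ≤ ENNReal.ofReal (bfun k) := by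
    intro k
    set t : ℝ := (k:ℝ) + 2 with htdef
    have ht2 : (2:ℝ) ≤ t := by simp [htdef]
    have ht0 : (0:ℝ) < t := by linarith
    set M : ℝ := Real.log (2 + 4 * t ^ 2) *
        (C * t ^ (-σ - 1) * Real.exp (-((n:ℝ) - 1) * ((k:ℝ) + 1))) with hMdef
    have h1 : ∫⁻ y in R ∩ A k, g y ∂μ ≤ ENNReal.ofReal M * μ (R ∩ A k) :=
      aux_core μ _ g _ (hpt k)
    have h2 : μ (R ∩ A k) ≤ ENNReal.ofReal (C * Real.exp (((n:ℝ) - 1) * ((k:ℝ) + 2))) := by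
      refine le_trans (measure_mono ?_) (hμ x ((k:ℝ) + 2) (by linarith))
      rintro y ⟨-, -, hy2⟩
      exact Metric.mem_ball'.mpr hy2
    calc ∫⁻ y in R ∩ A k, g y ∂μ ≤ ENNReal.ofReal M *
          ENNReal.ofReal (C * Real.exp (((n:ℝ) - 1) * ((k:ℝ) + 2))) :=
        h1.trans (mul_le_mul_right h2 _)
      _ = ENNReal.ofReal (M * (C * Real.exp (((n:ℝ) - 1) * ((k:ℝ) + 2)))) :=
        (ENNReal.ofReal_mul (hMnn k)).symm
      _ ≤ ENNReal.ofReal (bfun k) := by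
        apply ENNReal.ofReal_le_ofReal
        have hE : Real.exp (-((n:ℝ) - 1) * ((k:ℝ) + 1)) *
            Real.exp (((n:ℝ) - 1) * ((k:ℝ) + 2)) = Real.exp ((n:ℝ) - 1) := by
          rw [← Real.exp_add]
          congr 1
          ring
        have heq : M * (C * Real.exp (((n:ℝ) - 1) * ((k:ℝ) + 2))) =
            C ^ 2 * Real.exp ((n:ℝ) - 1) * (Real.log (2 + 4 * t ^ 2) * t ^ (-σ - 1)) := by
          rw [hMdef]
          rw [show Real.log (2 + 4 * t ^ 2) *
              (C * t ^ (-σ - 1) * Real.exp (-((n:ℝ) - 1) * ((k:ℝ) + 1))) *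
              (C * Real.exp (((n:ℝ) - 1) * ((k:ℝ) + 2))) =
              C ^ 2 * (Real.exp (-((n:ℝ) - 1) * ((k:ℝ) + 1)) *
                Real.exp (((n:ℝ) - 1) * ((k:ℝ) + 2))) *
              (Real.log (2 + 4 * t ^ 2) * t ^ (-σ - 1)) from by ring]
          rw [hE]
        rw [heq, hbfun]
        have hlt : Real.log (2 + 4 * t ^ 2) * t ^ (-σ - 1) ≤
            (10 / σ) * t ^ (σ / 2) * t ^ (-σ - 1) :=
          mul_le_mul_of_nonneg_right (aux_log σ t hσ ht2) (Real.rpow_nonneg ht0.le _)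
        have hrw : t ^ (σ / 2) * t ^ (-σ - 1) = t ^ (-1 - σ / 2) := by
          rw [← Real.rpow_add ht0]
          congr 1
          ring
        have : C ^ 2 * Real.exp ((n:ℝ) - 1) * (Real.log (2 + 4 * t ^ 2) * t ^ (-σ - 1)) ≤
            C ^ 2 * Real.exp ((n:ℝ) - 1) * ((10 / σ) * t ^ (-1 - σ / 2)) := by
          apply mul_le_mul_of_nonneg_left _ (by positivity)
          calc Real.log (2 + 4 * t ^ 2) * t ^ (-σ - 1) ≤
              (10 / σ) * t ^ (σ / 2) * t ^ (-σ - 1) := hlt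
            _ = (10 / σ) * t ^ (-1 - σ / 2) := by rw [mul_assoc, hrw]
        calc C ^ 2 * Real.exp ((n:ℝ) - 1) * (Real.log (2 + 4 * t ^ 2) * t ^ (-σ - 1)) ≤
            C ^ 2 * Real.exp ((n:ℝ) - 1) * ((10 / σ) * t ^ (-1 - σ / 2)) := this
          _ = C ^ 2 * Real.exp ((n:ℝ) - 1) * (10 / σ) * t ^ (-1 - σ / 2) := by ring
  -- assemble
  calc ∫⁻ y in R, g y ∂μ ≤ ∫⁻ y in ⋃ k : ℕ, (R ∩ A k), g y ∂μ := lintegral_mono_set hcov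
    _ ≤ ∑' k : ℕ, ∫⁻ y in R ∩ A k, g y ∂μ := lintegral_iUnion_le _ _
    _ ≤ ∑' k : ℕ, ENNReal.ofReal (bfun k) := ENNReal.tsum_le_tsum hann
    _ = ENNReal.ofReal (∑' k, bfun k) := (ENNReal.ofReal_tsum_of_nonneg hbnn hsum).symm

theorem stmt19 {X : Type*} [MetricSpace X] [MeasurableSpace X]
    (μ : Measure X) (o : X) (n : ℕ) (hn : 2 ≤ n)
    (σ : ℝ) (hσ : 0 < σ) (hσ1 : σ < 1)
    (P : ℝ → ℝ) (C : ℝ) (hC : 0 < C)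
    (hP0 : ∀ r, 0 ≤ P r)
    (hP : ∀ r : ℝ, 1 ≤ r → P r ≤ C * (1 + r) ^ (-σ - 1) * Real.exp (-((n : ℝ) - 1) * r))
    (hμ : ∀ (x : X) (r : ℝ), 1 ≤ r →
      μ (Metric.ball x r) ≤ ENNReal.ofReal (C * Real.exp (((n : ℝ) - 1) * r))) :
    ∃ C' > 0, ∀ x : X, 1 ≤ dist x o →
      (∫⁻ y in {y : X | 1 ≤ dist x y ∧ 2 * dist x o ≤ dist y o},
          ENNReal.ofReal
            (|Real.log (2 + dist x o ^ 2) - Real.log (2 + dist y o ^ 2)| * P (dist x y)) ∂μ)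
        ≤ ENNReal.ofReal C' ∧
      (∫⁻ y in {y : X | 1 ≤ dist x y ∧ 2 * dist y o ≤ dist x o},
          ENNReal.ofReal
            (|Real.log (2 + dist x o ^ 2) - Real.log (2 + dist y o ^ 2)| * P (dist x y)) ∂μ)
        ≤ ENNReal.ofReal C' ∧
      (∫⁻ y in {y : X | 1 ≤ dist x y ∧ dist x o / 2 ≤ dist y o ∧ dist y o ≤ 2 * dist x o},
          ENNReal.ofReal
            (|Real.log (2 + dist x o ^ 2) - Real.log (2 + dist y o ^ 2)| * P (dist x y)) ∂μ)
        ≤ ENNReal.ofReal C' := by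
  set S : ℝ := ∑' k : ℕ, C ^ 2 * Real.exp ((n : ℝ) - 1) * (10 / σ) * ((k : ℝ) + 2) ^ (-1 - σ / 2)
    with hS
  have hSnn : 0 ≤ S := by
    apply tsum_nonneg
    intro k
    have : (0:ℝ) ≤ ((k:ℝ) + 2) ^ (-1 - σ / 2) := Real.rpow_nonneg (by positivity) _
    positivity
  refine ⟨S + 1, by linarith, fun x hx => ?_⟩
  have hfinal : ∀ R : Set X, (∀ y ∈ R, 1 ≤ dist x y) →
      (∀ y ∈ R, |Real.log (2 + dist x o ^ 2) - Real.log (2 + dist y o ^ 2)| ≤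
        Real.log (2 + 4 * dist x y ^ 2)) →
      (∫⁻ y in R, ENNReal.ofReal
          (|Real.log (2 + dist x o ^ 2) - Real.log (2 + dist y o ^ 2)| * P (dist x y)) ∂μ)
        ≤ ENNReal.ofReal (S + 1) := by
    intro R h1 h2
    refine (aux_main μ o n hn σ hσ hσ1 P C hC hP0 hP hμ x R h1 h2).trans ?_
    exact ENNReal.ofReal_le_ofReal (by linarith)
  have hreg : ∀ y : X,
      (2 * dist x o ≤ dist y o ∨ 2 * dist y o ≤ dist x o ∨
        (dist x o / 2 ≤ dist y o ∧ dist y o ≤ 2 * dist x o)) → 1 ≤ dist x y →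
      |Real.log (2 + dist x o ^ 2) - Real.log (2 + dist y o ^ 2)| ≤
        Real.log (2 + 4 * dist x y ^ 2) := by
    intro y hcase hd
    apply aux_regions (dist x o) (dist y o) (dist x y) hx dist_nonneg hd
    · calc dist x o ≤ dist x y + dist y o := dist_triangle x y o
        _ = dist y o + dist x y := by ring
    · calc dist y o ≤ dist y x + dist x o := dist_triangle y x o
        _ = dist x o + dist x y := by rw [dist_comm y x]; ring
    · exact hcase
  refine ⟨hfinal _ (fun y hy => hy.1) (fun y hy => hreg y (Or.inl hy.2) hy.1),
    hfinal _ (fun y hy => hy.1) (fun y hy => hreg y (Or.inr (Or.inl hy.2)) hy.1),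
    hfinal _ (fun y hy => hy.1) (fun y hy => hreg y (Or.inr (Or.inr hy.2)) hy.1)⟩
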